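/- Let p be a prime and k a field of characteristic p, let A be the subring of k⟦t⟧ consisting of those power series Σ_{n≥0} aₙtⁿ with [k^p(a₀,a₁,…) : k^p] < ∞, and let c = Σ_{n≥0} aₙtⁿ ∈ k⟦t⟧ \ A. Define the tails c_i := Σ_{n≥0} a_{i+n}tⁿ for i ≥ 0. Then for every i ≥ 0: c_i = a_i + t·c_{i+1}; c_i lies in the subfield L := K(c) of k((t)); c_i is integral over A; c_i ∉ A; and the increasing chain of subrings A[c₀] ⊆ A[c₁] ⊆ A[c₂] ⊆ ⋯ of L is not stationary. -/

import Mathlib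

set_option synthInstance.maxHeartbeats 1000000
set_option maxHeartbeats 2000000

variable (k : Type*) [Field k] (p : ℕ) [Fact p.Prime] [CharP k p]

/-- The subfield `k^p` of `p`-th powers of the field `k` (of characteristic `p`). -/
noncomputable def pthPowerSubfield : Subfield k := (frobenius k p).fieldRange

variable {k p}

lemma isIntegral_pthPowerSubfield (a : k) : IsIntegral ↥(pthPowerSubfield k p) a := by
  refine ⟨Polynomial.X ^ p - Polynomial.C ⟨a ^ p, a, rfl⟩,
    Polynomial.monic_X_pow_sub_C _ (Fact.out : p.Prime).ne_zero, ?_⟩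
  simp only [Polynomial.eval₂_sub, Polynomial.eval₂_pow, Polynomial.eval₂_X, Polynomial.eval₂_C]
  exact sub_eq_zero.mpr rfl

variable (k p) in
/-- The field `k^p(a₀, a₁, …)` generated over `k^p` by the coefficients of a power
series `f` is a finite extension of `k^p`. -/
def HasFiniteCoeffField (f : PowerSeries k) : Prop :=
  FiniteDimensional ↥(pthPowerSubfield k p)
    ↥(IntermediateField.adjoin ↥(pthPowerSubfield k p)
      (Set.range fun n => PowerSeries.coeff n f))

lemma hasFiniteCoeffField_of_mem {f : PowerSeries k}
    (E : IntermediateField ↥(pthPowerSubfield k p) k) (hE : FiniteDimensional ↥(pthPowerSubfield k p) E)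
    (h : ∀ n, PowerSeries.coeff n f ∈ E) : HasFiniteCoeffField k p f := by
  have hle : IntermediateField.adjoin ↥(pthPowerSubfield k p)
      (Set.range fun n => PowerSeries.coeff n f) ≤ E := by
    rw [IntermediateField.adjoin_le_iff]
    rintro x ⟨n, rfl⟩; exact h n
  exact FiniteDimensional.of_injective
    (IntermediateField.inclusion hle).toLinearMap
    (IntermediateField.inclusion_injective hle)

variable (k p) in
/-- The subring `A ⊆ k⟦t⟧` of power series whose coefficients generate a finite
extension of `k^p`. -/
noncomputable def finiteCoeffSubring : Subring (PowerSeries k) where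
  carrier := {f | HasFiniteCoeffField k p f}
  zero_mem' := hasFiniteCoeffField_of_mem ⊥ inferInstance (fun n => by
    rw [map_zero]; exact zero_mem ⊥)
  one_mem' := hasFiniteCoeffField_of_mem ⊥ inferInstance (fun n => by
    rw [PowerSeries.coeff_one]
    split
    · exact one_mem ⊥
    · exact zero_mem ⊥)
  add_mem' := by
    intro f g hf hg
    haveI : FiniteDimensional ↥(pthPowerSubfield k p)
        ↥(IntermediateField.adjoin ↥(pthPowerSubfield k p)
          (Set.range fun n => PowerSeries.coeff n f)) := hf
    haveI : FiniteDimensional ↥(pthPowerSubfield k p)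
        ↥(IntermediateField.adjoin ↥(pthPowerSubfield k p)
          (Set.range fun n => PowerSeries.coeff n g)) := hg
    refine hasFiniteCoeffField_of_mem
      (IntermediateField.adjoin _ (Set.range fun n => PowerSeries.coeff n f) ⊔
        IntermediateField.adjoin _ (Set.range fun n => PowerSeries.coeff n g))
      inferInstance fun n => ?_
    rw [map_add]
    exact add_mem
      (le_sup_left (α := IntermediateField _ k) (IntermediateField.subset_adjoin _ _ ⟨n, rfl⟩))
      (le_sup_right (α := IntermediateField _ k) (IntermediateField.subset_adjoin _ _ ⟨n, rfl⟩))
  mul_mem' := by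
    intro f g hf hg
    haveI : FiniteDimensional ↥(pthPowerSubfield k p)
        ↥(IntermediateField.adjoin ↥(pthPowerSubfield k p)
          (Set.range fun n => PowerSeries.coeff n f)) := hf
    haveI : FiniteDimensional ↥(pthPowerSubfield k p)
        ↥(IntermediateField.adjoin ↥(pthPowerSubfield k p)
          (Set.range fun n => PowerSeries.coeff n g)) := hg
    refine hasFiniteCoeffField_of_mem
      (IntermediateField.adjoin _ (Set.range fun n => PowerSeries.coeff n f) ⊔
        IntermediateField.adjoin _ (Set.range fun n => PowerSeries.coeff n g))
      inferInstance fun n => ?_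
    rw [PowerSeries.coeff_mul]
    refine sum_mem fun c _ => mul_mem
      (le_sup_left (α := IntermediateField _ k) (IntermediateField.subset_adjoin _ _ ⟨c.1, rfl⟩))
      (le_sup_right (α := IntermediateField _ k) (IntermediateField.subset_adjoin _ _ ⟨c.2, rfl⟩))
  neg_mem' := by
    intro f hf
    haveI : FiniteDimensional ↥(pthPowerSubfield k p)
        ↥(IntermediateField.adjoin ↥(pthPowerSubfield k p)
          (Set.range fun n => PowerSeries.coeff n f)) := hf
    refine hasFiniteCoeffField_of_mem
      (IntermediateField.adjoin _ (Set.range fun n => PowerSeries.coeff n f))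
      inferInstance fun n => ?_
    rw [map_neg]
    exact neg_mem (IntermediateField.subset_adjoin _ _ ⟨n, rfl⟩)

variable (k p) in
/-- The subfield `L = K(c)` of `k((t))` generated by the subring `A = finiteCoeffSubring`
(hence by its fraction field `K`) together with the element `c ∈ k⟦t⟧`. -/
noncomputable def adjoinElemSubfield (c : PowerSeries k) : Subfield (LaurentSeries k) :=
  Subfield.closure
    ((HahnSeries.ofPowerSeries ℤ k) '' (finiteCoeffSubring k p : Set (PowerSeries k)) ∪
      {HahnSeries.ofPowerSeries ℤ k c})

/-- The `i`-th tail `c_i = Σ_{n≥0} a_{i+n} tⁿ` of a power series `c = Σ_{n≥0} aₙ tⁿ`. -/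
noncomputable def tailSeries (c : PowerSeries k) (i : ℕ) : PowerSeries k :=
  PowerSeries.mk fun n => PowerSeries.coeff (i + n) c

variable (k p) in
/-- The subring `A[c_i]` of `L ⊆ k((t))` generated by `A` and the `i`-th tail of `c`. -/
noncomputable def tailChainRing (c : PowerSeries k) (i : ℕ) : Subring (LaurentSeries k) :=
  Subring.closure
    ((HahnSeries.ofPowerSeries ℤ k) '' (finiteCoeffSubring k p : Set (PowerSeries k)) ∪
      {HahnSeries.ofPowerSeries ℤ k (tailSeries c i)})

section Aux
open PowerSeries

local notation "A" => finiteCoeffSubring k p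
local notation "of" => HahnSeries.ofPowerSeries ℤ k

lemma tail_rec (c : PowerSeries k) (i : ℕ) : tailSeries c i =
    PowerSeries.C (PowerSeries.coeff i c) + PowerSeries.X * tailSeries c (i + 1) := by
  ext n
  cases n with
  | zero => simp [tailSeries]
  | succ n =>
      simp only [tailSeries, coeff_mk, map_add, Polynomial.coeff_C, coeff_C,
        PowerSeries.coeff_succ_X_mul, Nat.succ_ne_zero, if_false, zero_add]
      ring_nf

lemma tail_zero (c : PowerSeries k) : tailSeries c 0 = c := by
  ext n; simp [tailSeries]

lemma C_mem_A (a : k) : (PowerSeries.C a) ∈ finiteCoeffSubring k p := by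
  haveI : FiniteDimensional ↥(pthPowerSubfield k p)
      ↥(IntermediateField.adjoin ↥(pthPowerSubfield k p) {a}) :=
    IntermediateField.adjoin.finiteDimensional (isIntegral_pthPowerSubfield a)
  refine hasFiniteCoeffField_of_mem (IntermediateField.adjoin _ {a}) inferInstance fun n => ?_
  rw [PowerSeries.coeff_C]
  split
  · exact IntermediateField.subset_adjoin _ _ rfl
  · exact zero_mem _

lemma X_mem_A : (PowerSeries.X : PowerSeries k) ∈ finiteCoeffSubring k p := by
  refine hasFiniteCoeffField_of_mem ⊥ inferInstance fun n => ?_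
  rw [PowerSeries.coeff_X]
  split
  · exact one_mem _
  · exact zero_mem _

lemma coeff_pow_p (f : PowerSeries k) (n : ℕ) :
    ∃ b : k, PowerSeries.coeff n (f ^ p) = b ^ p := by
  have hp : 0 < p := (Fact.out : p.Prime).pos
  set g : Polynomial k := PowerSeries.trunc (n + 1) f with hg
  have hdvd : (PowerSeries.X : PowerSeries k) ^ (n + 1) ∣ f ^ p - (g : PowerSeries k) ^ p := by
    refine dvd_trans ?_ (sub_dvd_pow_sub_pow f (g : PowerSeries k) p)
    rw [PowerSeries.X_pow_dvd_iff]
    intro m hm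
    rw [map_sub, Polynomial.coeff_coe, PowerSeries.coeff_trunc, if_pos hm, sub_self]
  have h1 : PowerSeries.coeff n (f ^ p) = PowerSeries.coeff n ((g : PowerSeries k) ^ p) := by
    have := (PowerSeries.X_pow_dvd_iff.mp hdvd) n (Nat.lt_succ_self n)
    rw [map_sub, sub_eq_zero] at this
    exact this
  rw [h1, ← Polynomial.coe_pow, Polynomial.coeff_coe, ← Polynomial.map_frobenius_expand p g,
    Polynomial.coeff_map, Polynomial.coeff_expand hp]
  simp only [frobenius_def]
  split
  · exact ⟨_, rfl⟩
  · exact ⟨0, rfl⟩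

lemma pow_p_mem_A (f : PowerSeries k) : f ^ p ∈ finiteCoeffSubring k p := by
  refine hasFiniteCoeffField_of_mem ⊥ inferInstance fun n => ?_
  obtain ⟨b, hb⟩ := coeff_pow_p (p := p) f n
  rw [hb, IntermediateField.mem_bot]
  exact ⟨⟨b ^ p, ⟨b, frobenius_def (R := k) (p := p) (x := b)⟩⟩, rfl⟩

end Aux
section Aux2
open PowerSeries Finset

lemma div_mem_A {f g x : PowerSeries k} (hf : f ∈ finiteCoeffSubring k p)
    (hg : g ∈ finiteCoeffSubring k p) (hg0 : g ≠ 0) (hmul : g * x = f) :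
    x ∈ finiteCoeffSubring k p := by
  classical
  haveI : FiniteDimensional ↥(pthPowerSubfield k p)
      ↥(IntermediateField.adjoin ↥(pthPowerSubfield k p)
        (Set.range fun n => PowerSeries.coeff n f)) := hf
  haveI : FiniteDimensional ↥(pthPowerSubfield k p)
      ↥(IntermediateField.adjoin ↥(pthPowerSubfield k p)
        (Set.range fun n => PowerSeries.coeff n g)) := hg
  set E := IntermediateField.adjoin ↥(pthPowerSubfield k p)
      (Set.range fun n => PowerSeries.coeff n f) ⊔
    IntermediateField.adjoin ↥(pthPowerSubfield k p)
      (Set.range fun n => PowerSeries.coeff n g) with hE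
  have hfE : ∀ n, PowerSeries.coeff n f ∈ E := fun n =>
    le_sup_left (α := IntermediateField _ k) (IntermediateField.subset_adjoin _ _ ⟨n, rfl⟩)
  have hgE : ∀ n, PowerSeries.coeff n g ∈ E := fun n =>
    le_sup_right (α := IntermediateField _ k) (IntermediateField.subset_adjoin _ _ ⟨n, rfl⟩)
  have hex : ∃ n, PowerSeries.coeff n g ≠ 0 := by
    by_contra h
    push_neg at h
    exact hg0 (PowerSeries.ext fun n => by rw [h n, map_zero])
  set m := Nat.find hex with hm
  have hgm : PowerSeries.coeff m g ≠ 0 := Nat.find_spec hex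
  have hlt : ∀ i, i < m → PowerSeries.coeff i g = 0 := fun i hi => by
    have := Nat.find_min hex hi
    push_neg at this
    exact this
  have key : ∀ n, PowerSeries.coeff n x ∈ E := by
    intro n
    induction n using Nat.strong_induction_on with
    | _ n ih =>
      have hsum : ∑ i ∈ Finset.range (m + n + 1),
          PowerSeries.coeff i g * PowerSeries.coeff (m + n - i) x
            = PowerSeries.coeff (m + n) f := by
        rw [← hmul, PowerSeries.coeff_mul, Finset.Nat.sum_antidiagonal_eq_sum_range_succ_mk]
      have hmem : m ∈ Finset.range (m + n + 1) := Finset.mem_range.mpr (by omega)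
      rw [← Finset.add_sum_erase _ _ hmem, Nat.add_sub_cancel_left] at hsum
      have h3 : PowerSeries.coeff n x = (PowerSeries.coeff m g)⁻¹ *
          (PowerSeries.coeff (m + n) f - ∑ i ∈ (Finset.range (m + n + 1)).erase m,
            PowerSeries.coeff i g * PowerSeries.coeff (m + n - i) x) := by
        rw [eq_inv_mul_iff_mul_eq₀ hgm]
        exact eq_sub_iff_add_eq.mpr hsum
      rw [h3]
      refine mul_mem (inv_mem (hgE m)) (sub_mem (hfE _) (sum_mem fun i hi => ?_))
      obtain ⟨hne, hir⟩ := Finset.mem_erase.mp hi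
      rw [Finset.mem_range] at hir
      rcases lt_or_gt_of_ne hne with h | h
      · rw [hlt i h, zero_mul]
        exact zero_mem _
      · exact mul_mem (hgE i) (ih _ (by omega))
  exact hasFiniteCoeffField_of_mem E inferInstance key

lemma mem_A_of_mem_K {x : PowerSeries k}
    (hx : (HahnSeries.ofPowerSeries ℤ k) x ∈ Subfield.closure
      ((HahnSeries.ofPowerSeries ℤ k) '' (finiteCoeffSubring k p : Set (PowerSeries k)))) :
    x ∈ finiteCoeffSubring k p := by
  have hcl : Subring.closure
      ((HahnSeries.ofPowerSeries ℤ k) '' (finiteCoeffSubring k p : Set (PowerSeries k)))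
        = Subring.map (HahnSeries.ofPowerSeries ℤ k) (finiteCoeffSubring k p) := by
    rw [← Subring.coe_map, Subring.closure_eq]
  rw [Subfield.mem_closure_iff, hcl] at hx
  obtain ⟨y, hy, z, hz, hdiv⟩ := hx
  obtain ⟨a, ha, rfl⟩ := Subring.mem_map.mp hy
  obtain ⟨b, hb, rfl⟩ := Subring.mem_map.mp hz
  by_cases hb0 : b = 0
  · subst hb0
    rw [map_zero, div_zero] at hdiv
    have : x = 0 := HahnSeries.ofPowerSeries_injective (Γ := ℤ) (R := k) (by rw [← hdiv, map_zero])
    rw [this]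
    exact zero_mem _
  · have hbz : (HahnSeries.ofPowerSeries ℤ k) b ≠ 0 := fun h =>
      hb0 (HahnSeries.ofPowerSeries_injective (Γ := ℤ) (R := k) (by rw [h, map_zero]))
    have : b * x = a := by
      apply HahnSeries.ofPowerSeries_injective (Γ := ℤ) (R := k)
      rw [map_mul]
      rw [div_eq_iff hbz] at hdiv
      rw [hdiv]; ring
    exact div_mem_A ha hb hb0 this

end Aux2
section Aux3

lemma tail_mem_L (c : PowerSeries k) (i : ℕ) :
    (HahnSeries.ofPowerSeries ℤ k) (tailSeries c i) ∈ adjoinElemSubfield k p c := by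
  induction i with
  | zero =>
      rw [tail_zero]
      exact Subfield.subset_closure (Or.inr rfl)
  | succ i ih =>
      have hX : (HahnSeries.ofPowerSeries ℤ k) (PowerSeries.X : PowerSeries k) ≠ 0 := fun h =>
        PowerSeries.X_ne_zero (HahnSeries.ofPowerSeries_injective (Γ := ℤ) (R := k)
          (by rw [h, map_zero]))
      have hXL : (HahnSeries.ofPowerSeries ℤ k) (PowerSeries.X : PowerSeries k)
          ∈ adjoinElemSubfield k p c :=
        Subfield.subset_closure (Or.inl ⟨_, X_mem_A, rfl⟩)
      have hCL : (HahnSeries.ofPowerSeries ℤ k) (PowerSeries.C (PowerSeries.coeff i c))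
          ∈ adjoinElemSubfield k p c :=
        Subfield.subset_closure (Or.inl ⟨_, C_mem_A _, rfl⟩)
      have h0 := congrArg (HahnSeries.ofPowerSeries ℤ k) (tail_rec c i)
      rw [map_add, map_mul] at h0
      have heq : (HahnSeries.ofPowerSeries ℤ k) (tailSeries c (i + 1)) =
          ((HahnSeries.ofPowerSeries ℤ k) (tailSeries c i) -
            (HahnSeries.ofPowerSeries ℤ k) (PowerSeries.C (PowerSeries.coeff i c))) *
          ((HahnSeries.ofPowerSeries ℤ k) (PowerSeries.X : PowerSeries k))⁻¹ := by
        rw [h0, add_sub_cancel_left, mul_comm ((HahnSeries.ofPowerSeries ℤ k) PowerSeries.X),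
          mul_inv_cancel_right₀ hX]
      rw [heq]
      exact mul_mem (sub_mem ih hCL) (inv_mem hXL)

lemma tail_integral (c : PowerSeries k) (i : ℕ) :
    letI : Algebra ↥(finiteCoeffSubring k p) (LaurentSeries k) :=
      ((HahnSeries.ofPowerSeries ℤ k).comp (finiteCoeffSubring k p).subtype).toAlgebra
    IsIntegral ↥(finiteCoeffSubring k p)
      ((HahnSeries.ofPowerSeries ℤ k) (tailSeries c i)) := by
  letI : Algebra ↥(finiteCoeffSubring k p) (LaurentSeries k) :=
    ((HahnSeries.ofPowerSeries ℤ k).comp (finiteCoeffSubring k p).subtype).toAlgebra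
  refine ⟨Polynomial.X ^ p - Polynomial.C ⟨tailSeries c i ^ p, pow_p_mem_A _⟩,
    Polynomial.monic_X_pow_sub_C _ (Fact.out : p.Prime).ne_zero, ?_⟩
  simp only [Polynomial.eval₂_sub, Polynomial.eval₂_pow, Polynomial.eval₂_X, Polynomial.eval₂_C]
  rw [sub_eq_zero, ← map_pow]
  rfl

lemma tail_mem_imp_mem (c : PowerSeries k) :
    ∀ i, tailSeries c i ∈ finiteCoeffSubring k p → c ∈ finiteCoeffSubring k p := by
  intro i
  induction i with
  | zero => intro h; rwa [tail_zero] at h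
  | succ i ih =>
      intro h
      exact ih (by rw [tail_rec c i]; exact add_mem (C_mem_A _) (mul_mem X_mem_A h))

lemma chain_mono (c : PowerSeries k) (i : ℕ) :
    tailChainRing k p c i ≤ tailChainRing k p c (i + 1) := by
  refine Subring.closure_le.mpr ?_
  rintro x (hx | rfl)
  · exact Subring.subset_closure (Or.inl hx)
  · have h0 := congrArg (HahnSeries.ofPowerSeries ℤ k) (tail_rec c i)
    rw [map_add, map_mul] at h0
    rw [h0]
    exact add_mem (Subring.subset_closure (Or.inl ⟨_, C_mem_A _, rfl⟩))
      (mul_mem (Subring.subset_closure (Or.inl ⟨_, X_mem_A, rfl⟩))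
        (Subring.subset_closure (Or.inr rfl)))

end Aux3
section Aux4
open Polynomial

/-- ring hom `A → L'`. -/
noncomputable def phiA : ↥(finiteCoeffSubring k p) →+* LaurentSeries k :=
  (HahnSeries.ofPowerSeries ℤ k).comp (finiteCoeffSubring k p).subtype

lemma mem_chain_poly {c : PowerSeries k} {i : ℕ} {z : LaurentSeries k}
    (hz : z ∈ tailChainRing k p c i) :
    ∃ q : Polynomial ↥(finiteCoeffSubring k p),
      q.eval₂ phiA ((HahnSeries.ofPowerSeries ℤ k) (tailSeries c i)) = z := by
  induction hz using Subring.closure_induction with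
  | mem x hx =>
      rcases hx with ⟨a, ha, rfl⟩ | rfl
      · exact ⟨Polynomial.C ⟨a, ha⟩, by simp [phiA]⟩
      · exact ⟨Polynomial.X, by simp⟩
  | zero => exact ⟨0, by simp⟩
  | one => exact ⟨1, by simp⟩
  | add x y hx hy ihx ihy =>
      obtain ⟨q1, h1⟩ := ihx; obtain ⟨q2, h2⟩ := ihy
      exact ⟨q1 + q2, by rw [Polynomial.eval₂_add, h1, h2]⟩
  | neg x hx ihx =>
      obtain ⟨q1, h1⟩ := ihx
      exact ⟨-q1, by rw [Polynomial.eval₂_neg, h1]⟩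
  | mul x y hx hy ihx ihy =>
      obtain ⟨q1, h1⟩ := ihx; obtain ⟨q2, h2⟩ := ihy
      exact ⟨q1 * q2, by rw [Polynomial.eval₂_mul, h1, h2]⟩

lemma mem_chain_poly_deg_lt {c : PowerSeries k} {i : ℕ} {z : LaurentSeries k}
    (hz : z ∈ tailChainRing k p c i) :
    ∃ r : Polynomial ↥(finiteCoeffSubring k p), r.degree < p ∧
      r.eval₂ phiA ((HahnSeries.ofPowerSeries ℤ k) (tailSeries c i)) = z := by
  obtain ⟨q, hq⟩ := mem_chain_poly hz
  set P : Polynomial ↥(finiteCoeffSubring k p) :=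
    Polynomial.X ^ p - Polynomial.C ⟨tailSeries c i ^ p, pow_p_mem_A _⟩ with hP
  have hPmonic : P.Monic := Polynomial.monic_X_pow_sub_C _ (Fact.out : p.Prime).ne_zero
  have hPdeg : P.degree = p := by
    rw [hP]
    exact Polynomial.degree_X_pow_sub_C (Fact.out : p.Prime).pos _
  have hPeval : P.eval₂ phiA ((HahnSeries.ofPowerSeries ℤ k) (tailSeries c i)) = 0 := by
    rw [hP, Polynomial.eval₂_sub, Polynomial.eval₂_pow, Polynomial.eval₂_X, Polynomial.eval₂_C,
      sub_eq_zero, ← map_pow]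
    rfl
  refine ⟨q %ₘ P, hPdeg ▸ Polynomial.degree_modByMonic_lt q hPmonic, ?_⟩
  conv_rhs => rw [← hq, ← Polynomial.modByMonic_add_div q P]
  rw [Polynomial.eval₂_add, Polynomial.eval₂_mul, hPeval, zero_mul, add_zero]

lemma key_independence {x : PowerSeries k} (hx : x ∉ finiteCoeffSubring k p)
    {D : Polynomial ↥(finiteCoeffSubring k p)} (hdeg : D.degree < p)
    (hev : D.eval₂ phiA ((HahnSeries.ofPowerSeries ℤ k) x) = 0) : D = 0 := by
  by_contra hD0
  set L' := LaurentSeries k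
  set K' : Subfield L' := Subfield.closure
    ((HahnSeries.ofPowerSeries ℤ k) '' (finiteCoeffSubring k p : Set (PowerSeries k))) with hK'
  set ι : ↥K' →+* L' := K'.subtype with hι
  letI : Algebra ↥K' L' := ι.toAlgebra
  have hψmem : ∀ a : ↥(finiteCoeffSubring k p), phiA a ∈ K' := fun a =>
    Subfield.subset_closure ⟨a.1, a.2, rfl⟩
  set ψ : ↥(finiteCoeffSubring k p) →+* ↥K' := RingHom.codRestrict phiA K' hψmem with hψ
  have hψinj : Function.Injective ψ := by
    intro a b hab
    apply Subtype.ext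
    apply HahnSeries.ofPowerSeries_injective (Γ := ℤ) (R := k)
    exact congrArg Subtype.val hab
  set ξ : L' := (HahnSeries.ofPowerSeries ℤ k) x with hξ
  -- ξ is integral over K'
  have hxpK' : (HahnSeries.ofPowerSeries ℤ k) (x ^ p) ∈ K' :=
    Subfield.subset_closure ⟨x ^ p, pow_p_mem_A _, rfl⟩
  have hint : IsIntegral ↥K' ξ := by
    refine ⟨Polynomial.X ^ p - Polynomial.C ⟨(HahnSeries.ofPowerSeries ℤ k) (x ^ p), hxpK'⟩,
      Polynomial.monic_X_pow_sub_C _ (Fact.out : p.Prime).ne_zero, ?_⟩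
    simp only [Polynomial.eval₂_sub, Polynomial.eval₂_pow, Polynomial.eval₂_X,
      Polynomial.eval₂_C, sub_eq_zero]
    exact (map_pow (HahnSeries.ofPowerSeries ℤ k) x p).symm
  set D' : Polynomial ↥K' := D.map ψ with hD'
  have hD'0 : D' ≠ 0 := (Polynomial.map_ne_zero_iff hψinj).mpr hD0
  have hD'deg : D'.degree < p := by
    rwa [hD', Polynomial.degree_map_eq_of_injective hψinj]
  have hD'ev : Polynomial.aeval ξ D' = 0 := by
    show Polynomial.eval₂ (algebraMap ↥K' L') ξ D' = 0
    rw [hD', Polynomial.eval₂_map]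
    have : (algebraMap ↥K' L').comp ψ = phiA := rfl
    rw [this, hev]
  set g := minpoly ↥K' ξ with hg
  have hgdvdD' : g ∣ D' := minpoly.dvd _ _ hD'ev
  have hgdeg : g.degree < p := lt_of_le_of_lt (Polynomial.degree_le_of_dvd hgdvdD' hD'0) hD'deg
  set j := g.natDegree with hj
  have hg0 : g ≠ 0 := minpoly.ne_zero hint
  have hjlt : j < p := (Polynomial.natDegree_lt_iff_degree_lt hg0).mpr hgdeg
  have hjpos : 0 < j := minpoly.natDegree_pos hint
  -- g divides X^p - C(ξ^p)
  have hgdvdP : g ∣ (Polynomial.X ^ p -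
      Polynomial.C (⟨(HahnSeries.ofPowerSeries ℤ k) (x ^ p), hxpK'⟩ : ↥K')) := by
    apply minpoly.dvd
    simp only [map_sub, map_pow, Polynomial.aeval_X, Polynomial.aeval_C, sub_eq_zero]
    rfl
  -- map everything to L'
  haveI : CharP L' p := charP_of_injective_algebraMap (algebraMap k L').injective p
  haveI : CharP (Polynomial L') p := charP_of_injective_ringHom Polynomial.C_injective p
  set G : Polynomial L' := g.map ι with hG
  have hιinj : Function.Injective ι := fun a b h => Subtype.ext h
  have hGdvd : G ∣ (Polynomial.X - Polynomial.C ξ) ^ p := by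
    have h1 := Polynomial.map_dvd ι hgdvdP
    have hmap : (Polynomial.X ^ p - Polynomial.C
        (⟨(HahnSeries.ofPowerSeries ℤ k) (x ^ p), hxpK'⟩ : ↥K')).map ι =
        (Polynomial.X - Polynomial.C ξ) ^ p := by
      rw [Polynomial.map_sub, Polynomial.map_pow, Polynomial.map_X, Polynomial.map_C]
      have h2 : ι (⟨(HahnSeries.ofPowerSeries ℤ k) (x ^ p), hxpK'⟩ : ↥K') = ξ ^ p := by
        show (HahnSeries.ofPowerSeries ℤ k) (x ^ p) = ξ ^ p
        rw [hξ, map_pow]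
      rw [h2, sub_pow_char (x := (Polynomial.X : Polynomial L')) (y := Polynomial.C ξ),
        ← Polynomial.C_pow]
    rwa [hmap] at h1
  obtain ⟨n, hnp, hassoc⟩ := (dvd_prime_pow (Polynomial.prime_X_sub_C ξ) p).mp hGdvd
  have hGmonic : G.Monic := (minpoly.monic hint).map ι
  have hGeq : G = (Polynomial.X - Polynomial.C ξ) ^ n :=
    Polynomial.eq_of_monic_of_associated hGmonic ((Polynomial.monic_X_sub_C ξ).pow n) hassoc
  have hnj : n = j := by
    have h3 := congrArg Polynomial.natDegree hGeq
    rw [Polynomial.natDegree_pow, Polynomial.natDegree_X_sub_C, mul_one] at h3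
    rw [← h3, hG]
    exact Polynomial.natDegree_map_eq_of_injective hιinj g
  subst hnj
  -- compute the coefficient of degree j - 1
  have hcoeff : G.coeff (j - 1) = -(ξ * (j : L')) := by
    rw [hGeq]
    have h4 : Polynomial.X - Polynomial.C ξ = Polynomial.X + Polynomial.C (-ξ) := by
      rw [Polynomial.C_neg]; ring
    rw [h4, Polynomial.coeff_X_add_C_pow]
    have h5 : j - (j - 1) = 1 := by omega
    have h6 : j.choose (j - 1) = j := by
      have := Nat.choose_symm (n := j) (k := 1) hjpos
      rwa [Nat.choose_one_right] at this
    rw [h5, h6, pow_one]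
    ring
  have hcmem : G.coeff (j - 1) ∈ K' := by
    rw [hG, Polynomial.coeff_map]
    exact (g.coeff (j - 1)).2
  rw [hcoeff] at hcmem
  have hmul : ξ * (j : L') ∈ K' := by
    have := neg_mem hcmem
    rwa [neg_neg] at this
  have hj0 : (j : L') ≠ 0 := by
    intro h
    have := (CharP.cast_eq_zero_iff L' p j).mp h
    exact absurd (Nat.le_of_dvd hjpos this) (not_le.mpr hjlt)
  have hξK : ξ ∈ K' := by
    have h7 : ξ = (ξ * (j : L')) * ((j : L'))⁻¹ := by
      rw [mul_inv_cancel_right₀ hj0]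
    rw [h7]
    exact mul_mem hmul (inv_mem (natCast_mem K' j))
  exact hx (mem_A_of_mem_K hξK)

end Aux4
section Aux5
open Polynomial

lemma chain_not_stationary (c : PowerSeries k) (hc : c ∉ finiteCoeffSubring k p) :
    ¬ ∃ N, ∀ i, N ≤ i → tailChainRing k p c i = tailChainRing k p c N := by
  rintro ⟨N, hN⟩
  have hp2 : 2 ≤ p := (Fact.out : p.Prime).two_le
  have hmem : (HahnSeries.ofPowerSeries ℤ k) (tailSeries c (N + 1)) ∈ tailChainRing k p c N := by
    rw [← hN (N + 1) (by omega)]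
    exact Subring.subset_closure (Or.inr rfl)
  obtain ⟨r, hrdeg, hrev⟩ := mem_chain_poly_deg_lt hmem
  set ξ : LaurentSeries k := (HahnSeries.ofPowerSeries ℤ k) (tailSeries c (N + 1)) with hξ
  set α : ↥(finiteCoeffSubring k p) :=
    ⟨PowerSeries.C (PowerSeries.coeff N c), C_mem_A _⟩ with hα
  set τ : ↥(finiteCoeffSubring k p) := ⟨PowerSeries.X, X_mem_A⟩ with hτ
  set Lp : Polynomial ↥(finiteCoeffSubring k p) :=
    Polynomial.C α + Polynomial.C τ * Polynomial.X with hLp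
  set D : Polynomial ↥(finiteCoeffSubring k p) := r.comp Lp - Polynomial.X with hD
  -- evaluation of Lp at ξ gives of (tail N)
  have hLpev : Lp.eval₂ phiA ξ = (HahnSeries.ofPowerSeries ℤ k) (tailSeries c N) := by
    rw [hLp, Polynomial.eval₂_add, Polynomial.eval₂_mul, Polynomial.eval₂_C,
      Polynomial.eval₂_C, Polynomial.eval₂_X]
    have h0 := congrArg (HahnSeries.ofPowerSeries ℤ k) (tail_rec c N)
    rw [map_add, map_mul] at h0
    exact h0.symm
  have hDev : D.eval₂ phiA ξ = 0 := by
    rw [hD, Polynomial.eval₂_sub, Polynomial.eval₂_X, Polynomial.eval₂_comp, hLpev, hrev]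
    exact sub_self _
  -- D is nonzero: its coefficient of X has nonzero constant term
  set ε : ↥(finiteCoeffSubring k p) →+* k :=
    (PowerSeries.constantCoeff).comp (finiteCoeffSubring k p).subtype with hε
  have hLpmap : Lp.map ε = Polynomial.C (ε α) := by
    rw [hLp, Polynomial.map_add, Polynomial.map_mul, Polynomial.map_C, Polynomial.map_C,
      Polynomial.map_X]
    have : ε τ = 0 := PowerSeries.constantCoeff_X
    rw [this, Polynomial.C_0, zero_mul, add_zero]
  have hcoeff1 : ε ((r.comp Lp).coeff 1) = 0 := by
    have h1 : ((r.comp Lp).map ε).coeff 1 = ε ((r.comp Lp).coeff 1) :=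
      Polynomial.coeff_map ε 1
    rw [← h1, Polynomial.map_comp, hLpmap, Polynomial.comp_C, Polynomial.coeff_C]
    simp
  have hD0 : D ≠ 0 := by
    intro h
    have h2 : D.coeff 1 = 0 := by rw [h, Polynomial.coeff_zero]
    rw [hD, Polynomial.coeff_sub, Polynomial.coeff_X_one] at h2
    have h3 := congrArg ε h2
    rw [map_sub, hcoeff1, map_zero, map_one, zero_sub] at h3
    exact one_ne_zero (neg_eq_zero.mp h3)
  -- degree bound
  have hrnat : r.natDegree < p := by
    rcases eq_or_ne r 0 with h | h
    · rw [h, Polynomial.natDegree_zero]; omega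
    · exact (Polynomial.natDegree_lt_iff_degree_lt h).mpr hrdeg
  have hLpnat : Lp.natDegree ≤ 1 := by
    rw [hLp]
    refine le_trans (Polynomial.natDegree_add_le _ _) ?_
    simp only [Polynomial.natDegree_C, zero_le, max_le_iff, true_and]
    refine le_trans (Polynomial.natDegree_mul_le) ?_
    simp [Polynomial.natDegree_C, Polynomial.natDegree_X]
  have hDnat : D.natDegree < p := by
    have h4 : (r.comp Lp).natDegree ≤ r.natDegree := by
      refine le_trans (Polynomial.natDegree_comp_le) ?_
      calc r.natDegree * Lp.natDegree ≤ r.natDegree * 1 :=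
            Nat.mul_le_mul_left _ hLpnat
        _ = r.natDegree := by ring
    have h5 := Polynomial.natDegree_sub_le (r.comp Lp) (Polynomial.X)
    rw [Polynomial.natDegree_X, ← hD] at h5
    omega
  have hDdeg : D.degree < p := (Polynomial.natDegree_lt_iff_degree_lt hD0).mp hDnat
  exact hD0 (key_independence (fun h => hc (tail_mem_imp_mem c (N + 1) h)) hDdeg hDev)

end Aux5
/-- For `c ∈ k⟦t⟧ \ A` with tails `c_i`: `c_i = a_i + t·c_{i+1}`;
`c_i` lies in `L = K(c)`; `c_i` is integral over `A`; `c_i ∉ A`; and the increasing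
chain of subrings `A[c₀] ⊆ A[c₁] ⊆ ⋯` of `L` is not stationary. -/
theorem tailSeries_properties (c : PowerSeries k) (hc : c ∉ finiteCoeffSubring k p) :
    (∀ i, tailSeries c i =
      PowerSeries.C (PowerSeries.coeff i c) + PowerSeries.X * tailSeries c (i + 1)) ∧
    (∀ i, (HahnSeries.ofPowerSeries ℤ k) (tailSeries c i) ∈ adjoinElemSubfield k p c) ∧
    (letI : Algebra ↥(finiteCoeffSubring k p) (LaurentSeries k) :=
        ((HahnSeries.ofPowerSeries ℤ k).comp (finiteCoeffSubring k p).subtype).toAlgebra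
      ∀ i, IsIntegral ↥(finiteCoeffSubring k p)
        ((HahnSeries.ofPowerSeries ℤ k) (tailSeries c i))) ∧
    (∀ i, tailSeries c i ∉ finiteCoeffSubring k p) ∧
    (∀ i, tailChainRing k p c i ≤ tailChainRing k p c (i + 1)) ∧
    ¬ ∃ N, ∀ i, N ≤ i → tailChainRing k p c i = tailChainRing k p c N :=
  ⟨tail_rec c, tail_mem_L c, fun i => tail_integral c i,
    fun i h => hc (tail_mem_imp_mem c i h), chain_mono c, chain_not_stationary c hc⟩
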